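/- Let f : ℝ^d × ℝ^m → ℝ be a function. Define S = { λ ∈ ℝ^m : λ_i ≥ 0 for all i, and f(x; e^{α diag(λ)} θ) = e^{α} f(x; θ) for all α ∈ ℝ, x ∈ ℝ^d and θ ∈ ℝ^m }, the set of nonnegative scaling vectors λ with respect to which f is λ-quasi-homogeneous. Then S is a convex subset of ℝ^m. -/
import Mathlib


/-- Lemma B.1: the set `S` of nonnegative scaling vectors `λ` with respect to
which a fixed model `f` is `λ`-quasi-homogeneous is convex. -/
theorem stmt_18 {d m : ℕ} (f : (Fin d → ℝ) → (Fin m → ℝ) → ℝ) :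
    Convex ℝ {l : Fin m → ℝ | (∀ i, 0 ≤ l i) ∧
      ∀ (α : ℝ) (x : Fin d → ℝ) (θ : Fin m → ℝ),
        f x (fun i => Real.exp (α * l i) * θ i) = Real.exp α * f x θ} := by
  rintro l ⟨hl0, hl⟩ μ ⟨hμ0, hμ⟩ a b ha hb hab
  constructor
  · intro i
    have := hl0 i; have := hμ0 i
    simp only [Pi.add_apply, Pi.smul_apply, smul_eq_mul]
    positivity
  · intro α x θ
    have key : (fun i => Real.exp (α * (a • l + b • μ) i) * θ i)
        = fun i => Real.exp ((α * a) * l i) * (Real.exp ((α * b) * μ i) * θ i) := by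
      funext i
      rw [← mul_assoc, ← Real.exp_add]
      rw [show α * (a • l + b • μ) i = α * a * l i + α * b * μ i by simp; ring]
    rw [key, hl (α * a) x, hμ (α * b) x, ← mul_assoc, ← Real.exp_add]
    have : α * a + α * b = α := by rw [← mul_add, hab, mul_one]
    rw [this]
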